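/- Let q₁, q₂ be coprime positive integers with q₁ ≤ q₂, and suppose that the progression A = {x₁q₁ + x₂q₂ : |x₁| ≤ X₁, |x₂| ≤ X₂} ⊆ [-T, T] contains no non-zero perfect square, with 1 ≤ X₁ and 1 ≤ X₂. Assume the Zaharescu-type bound H(q₁) ≤ C_ε·q₁^(1/4+ε) (where H is as defined below). Then |A| ≤ C'_ε · q₁^(1/8+ε) · T / q₂^(1/2). -/

import Mathlib

/-- `H k` is the smallest positive integer `h` such that every residue class `x` coprime
to `k` can be written as `x ≡ y·z² (mod k)` with `|y| ≤ h`. -/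
noncomputable def Hfun (k : ℕ) : ℕ :=
  sInf {h : ℕ | 0 < h ∧ ∀ x : ℤ, Int.gcd x k = 1 →
    ∃ y z : ℤ, |y| ≤ (h : ℤ) ∧ (x : ZMod k) = (y : ZMod k) * (z : ZMod k) ^ 2}

lemma Hfun_spec (k : ℕ) (hk : 0 < k) :
    0 < Hfun k ∧ ∀ x : ℤ, Int.gcd x k = 1 →
      ∃ y z : ℤ, |y| ≤ (Hfun k : ℤ) ∧ (x : ZMod k) = (y : ZMod k) * (z : ZMod k) ^ 2 := by
  have hmem : k ∈ {h : ℕ | 0 < h ∧ ∀ x : ℤ, Int.gcd x k = 1 →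
      ∃ y z : ℤ, |y| ≤ (h : ℤ) ∧ (x : ZMod k) = (y : ZMod k) * (z : ZMod k) ^ 2} := by
    refine ⟨hk, fun x _ => ⟨x % k, 1, ?_, ?_⟩⟩
    · have h1 : 0 ≤ x % (k:ℤ) := Int.emod_nonneg x (by exact_mod_cast hk.ne')
      have h2 : x % (k:ℤ) < k := Int.emod_lt_of_pos x (by exact_mod_cast hk)
      rw [abs_of_nonneg h1]; omega
    · have hk0 : ((k:ℤ) : ZMod k) = 0 := by
        push_cast [ZMod.natCast_self]; ring
      have : ((x % (k:ℤ) : ℤ) : ZMod k) = (x : ZMod k) := by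
        rw [Int.emod_def]; push_cast at hk0 ⊢
        rw [hk0]; ring
      rw [this]; ring
  exact Nat.sInf_mem ⟨k, hmem⟩

lemma sq_mono' {a b : ℝ} (ha : 0 ≤ a) (h : a ≤ b) : a ^ 2 ≤ b ^ 2 := by nlinarith

lemma lt_sq_self {b : ℝ} (hb : 2 ≤ b) : b < b ^ 2 := by nlinarith

lemma aux_c1 {c : ℝ} (hc : 0 < c) : c + 1 ≤ 25 * (c+1)^2 := by nlinarith

lemma aux_c2 {c : ℝ} (hc : 0 < c) : 4*(c+1) ≤ 25 * (c+1)^2 := by nlinarith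

lemma one_le_mul' {a b : ℝ} (ha : 1 ≤ a) (hb : 1 ≤ b) : 1 ≤ a * b := by
  calc (1:ℝ) = 1*1 := by ring
    _ ≤ a * b := mul_le_mul ha hb zero_le_one (zero_le_one.trans ha)

set_option maxHeartbeats 1000000 in
lemma exists_square (ε Cε : ℝ) (hε : 0 < ε) (hCε : 0 < Cε) (q₁ q₂ : ℕ)
    (hq₁ : 0 < q₁) (hq₂ : 0 < q₂) (h12 : q₁ ≤ q₂) (hcop : Nat.Coprime q₁ q₂)
    (hH : (Hfun q₁ : ℝ) ≤ Cε * (q₁:ℝ) ^ ((1:ℝ)/4 + ε)) :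
    ∃ x₁ x₂ n : ℤ, n ≠ 0 ∧ x₁ * q₁ + x₂ * q₂ = n ^ 2 ∧
      |(x₁:ℝ)| ≤ 5*(Cε+1) * (q₁:ℝ) ^ ((1:ℝ)/8 + ε) * (q₂:ℝ) ^ ((1:ℝ)/2) ∧
      |(x₂:ℝ)| * (q₂:ℝ) ^ ((1:ℝ)/2) ≤ 5*(Cε+1) * (q₁:ℝ) ^ ((9:ℝ)/8 + ε) := by
  haveI : NeZero q₁ := ⟨hq₁.ne'⟩
  obtain ⟨hHpos, hHspec⟩ := Hfun_spec q₁ hq₁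
  set H : ℕ := Hfun q₁ with hHdef
  have hq₁R : (1:ℝ) ≤ (q₁:ℝ) := by exact_mod_cast hq₁
  have hq₂R : (1:ℝ) ≤ (q₂:ℝ) := by exact_mod_cast hq₂
  have h12R : (q₁:ℝ) ≤ (q₂:ℝ) := by exact_mod_cast h12
  have hHR : (1:ℝ) ≤ (H:ℝ) := by exact_mod_cast hHpos
  set E₁ : ℝ := (q₁:ℝ) ^ ((1:ℝ)/8 + ε) with hE₁def
  set S : ℝ := (q₂:ℝ) ^ ((1:ℝ)/2) with hSdef
  have hE₁pos : 0 < E₁ := Real.rpow_pos_of_pos (by linarith) _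
  have hE₁1 : (1:ℝ) ≤ E₁ := Real.one_le_rpow hq₁R (by norm_num; linarith)
  have hSpos : 0 < S := Real.rpow_pos_of_pos (by linarith) _
  have hSsq : S^2 = (q₂:ℝ) := by
    rw [hSdef, ← Real.rpow_natCast ((q₂:ℝ) ^ ((1:ℝ)/2)) 2, ← Real.rpow_mul (by linarith)]
    norm_num
  have hE₉ : (q₁:ℝ) ^ ((9:ℝ)/8 + ε) = (q₁:ℝ) * E₁ := by
    rw [hE₁def, show (9:ℝ)/8 + ε = 1 + ((1:ℝ)/8 + ε) by ring,
      Real.rpow_add (by linarith) 1, Real.rpow_one]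
  have hE₁sq : E₁^2 = (q₁:ℝ) ^ ((1:ℝ)/4 + 2*ε) := by
    rw [hE₁def, ← Real.rpow_natCast ((q₁:ℝ) ^ ((1:ℝ)/8 + ε)) 2, ← Real.rpow_mul (by linarith)]
    norm_num; ring_nf
  have hHE : (H:ℝ) ≤ (Cε+1) * E₁^2 := by
    have h1 : (q₁:ℝ) ^ ((1:ℝ)/4 + ε) ≤ (q₁:ℝ) ^ ((1:ℝ)/4 + 2*ε) :=
      Real.rpow_le_rpow_of_exponent_le hq₁R (by linarith)
    have h2 : (0:ℝ) < (q₁:ℝ) ^ ((1:ℝ)/4 + ε) := Real.rpow_pos_of_pos (by linarith) _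
    rw [hE₁sq]
    calc (H:ℝ) ≤ Cε * (q₁:ℝ) ^ ((1:ℝ)/4 + ε) := hH
      _ ≤ (Cε+1) * (q₁:ℝ) ^ ((1:ℝ)/4 + 2*ε) := by nlinarith
  by_cases hcase : ((q₁:ℝ))^2 ≤ (H:ℝ) * q₂
  · -- trivial square q₁²
    refine ⟨q₁, 0, q₁, by exact_mod_cast hq₁.ne', by push_cast; ring, ?_, ?_⟩
    · have h1 : ((q₁:ℝ))^2 ≤ (5*(Cε+1) * E₁ * S)^2 := by
        have hc : (Cε+1) ≤ (5*(Cε+1))^2 := by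
          have := aux_c1 hCε
          calc Cε+1 ≤ 25*(Cε+1)^2 := this
            _ = (5*(Cε+1))^2 := by ring
        calc ((q₁:ℝ))^2 ≤ (H:ℝ) * q₂ := hcase
          _ ≤ ((Cε+1) * E₁^2) * q₂ :=
            mul_le_mul_of_nonneg_right hHE (by positivity)
          _ = (Cε+1) * (E₁^2 * q₂) := by ring
          _ ≤ (5*(Cε+1))^2 * (E₁^2 * q₂) := mul_le_mul_of_nonneg_right hc (by positivity)
          _ = (5*(Cε+1) * E₁ * S)^2 := by
            rw [show (5*(Cε+1)*E₁*S)^2 = (5*(Cε+1))^2*(E₁^2*S^2) from by ring, hSsq]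
      have := le_of_pow_le_pow_left₀ two_ne_zero (by positivity : (0:ℝ) ≤ 5*(Cε+1) * E₁ * S) h1
      simpa [abs_of_nonneg (by positivity : (0:ℝ) ≤ (q₁:ℝ))] using this
    · simp; positivity
  · push_neg at hcase
    have hq₁2 : 2 ≤ q₁ := by
      rcases Nat.lt_or_ge q₁ 2 with h | h
      · exfalso
        have h1 : q₁ = 1 := by omega
        rw [h1] at hcase
        push_cast at hcase
        have := one_le_mul' hHR hq₂R
        linarith
      · exact h
    have hq₁2R : (2:ℝ) ≤ (q₁:ℝ) := by exact_mod_cast hq₁2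
    set S₂ : ℝ := Real.sqrt ((H:ℝ) * q₂) with hS₂def
    have hS₂sq : S₂^2 = (H:ℝ)*q₂ := Real.sq_sqrt (by positivity)
    have hS₂pos : 0 < S₂ := Real.sqrt_pos.mpr (by positivity)
    have hS₂1 : 1 ≤ S₂ := (Real.le_sqrt' one_pos).mpr (by
      calc (1:ℝ)^2 = 1*1 := by ring
        _ ≤ (H:ℝ)*q₂ := mul_le_mul hHR hq₂R zero_le_one (zero_le_one.trans hHR))
    have hS₂lt : S₂ < (q₁:ℝ) := (Real.sqrt_lt' (by positivity)).mpr hcase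
    set t : ℝ := Real.sqrt ((q₁:ℝ)/S₂) with htdef
    have htnn : 0 ≤ t := Real.sqrt_nonneg _
    have ht2 : t^2 * S₂ = (q₁:ℝ) := by
      rw [htdef, Real.sq_sqrt (by positivity)]
      field_simp
    have ht1 : 1 ≤ t := (Real.le_sqrt' one_pos).mpr (by
      rw [one_pow]; exact (one_le_div hS₂pos).mpr hS₂lt.le)
    have htq₁ : t < (q₁:ℝ) := (Real.sqrt_lt' (by positivity)).mpr
      ((div_le_self (by positivity) hS₂1).trans_lt (lt_sq_self hq₁2R))
    set M : ℕ := ⌊t⌋₊ with hMdef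
    have hM1 : 0 < M := by
      have : (1:ℕ) ≤ M := Nat.le_floor (by exact_mod_cast ht1)
      omega
    have hMle : (M:ℝ) ≤ t := Nat.floor_le htnn
    have hMlt : t < (M:ℝ) + 1 := Nat.lt_floor_add_one t
    have hMt2 : ((M:ℝ))^2 ≤ t^2 := sq_mono' (Nat.cast_nonneg M) hMle
    have hMq₁ : M < q₁ := by exact_mod_cast lt_of_le_of_lt hMle htq₁
    -- units and H-decomposition
    set u : (ZMod q₁)ˣ := ZMod.unitOfCoprime q₂ hcop.symm with hudef
    have hu : (u : ZMod q₁) = (q₂ : ZMod q₁) := ZMod.coe_unitOfCoprime q₂ hcop.symm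
    set v : (ZMod q₁)ˣ := u⁻¹ with hvdef
    have hvcop : Nat.Coprime ((v : ZMod q₁)).val q₁ := ZMod.val_coe_unit_coprime v
    obtain ⟨y, z, hy, hyz⟩ := hHspec (((v : ZMod q₁)).val : ℤ) (by
      rw [Int.gcd_natCast_natCast]; exact hvcop)
    have hcastv : ((((v : ZMod q₁)).val : ℤ) : ZMod q₁) = (v : ZMod q₁) := by
      push_cast
      rw [ZMod.natCast_val, ZMod.cast_id]
    rw [hcastv] at hyz
    have hvq : (v : ZMod q₁) * (q₂ : ZMod q₁) = 1 := by
      rw [← hu, hvdef]; exact u.inv_mul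
    have h1 : (y : ZMod q₁) * (z : ZMod q₁)^2 * (q₂ : ZMod q₁) = 1 := by
      rw [← hyz]; exact hvq
    have hZu : IsUnit ((z : ZMod q₁)) := by
      have hv' : IsUnit ((y:ZMod q₁) * (z:ZMod q₁)^2) := by rw [← hyz]; exact v.isUnit
      rw [show (y:ZMod q₁)*(z:ZMod q₁)^2 = ((y:ZMod q₁)*(z:ZMod q₁))*(z:ZMod q₁) from by
        ring] at hv'
      exact isUnit_of_mul_isUnit_right hv'
    set w : ℤ := ((((hZu.unit⁻¹ : (ZMod q₁)ˣ) : ZMod q₁)).val : ℤ) with hwdef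
    have hwz : ((w:ℤ) : ZMod q₁) * (z : ZMod q₁) = 1 := by
      have h' : ((hZu.unit⁻¹ : (ZMod q₁)ˣ) : ZMod q₁) * ((hZu.unit : (ZMod q₁)ˣ) : ZMod q₁)
          = 1 := by rw [← Units.val_mul, inv_mul_cancel, Units.val_one]
      rw [IsUnit.unit_spec] at h'
      rw [hwdef]
      push_cast
      rw [ZMod.natCast_val, ZMod.cast_id]
      exact h'
    -- Dirichlet approximation
    obtain ⟨a, j, hj0, hjM, hja⟩ := Real.exists_int_int_abs_mul_sub_le ((w:ℝ)/(q₁:ℝ)) hM1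
    set r : ℤ := j * w - a * q₁ with hrdef
    have hrR : |(r:ℝ)| ≤ (q₁:ℝ)/((M:ℝ)+1) := by
      have hq₁0 : (q₁:ℝ) ≠ 0 := by positivity
      have hre : (r:ℝ) = ((j:ℝ) * ((w:ℝ)/(q₁:ℝ)) - (a:ℝ)) * (q₁:ℝ) := by
        field_simp [hrdef]
        push_cast
        rw [hrdef]; push_cast; ring
      rw [hre, abs_mul, abs_of_nonneg (by positivity : (0:ℝ) ≤ (q₁:ℝ))]
      calc |(j:ℝ) * ((w:ℝ)/(q₁:ℝ)) - (a:ℝ)| * (q₁:ℝ)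
          ≤ (1/((M:ℝ)+1)) * (q₁:ℝ) := by
            exact mul_le_mul_of_nonneg_right hja (by positivity)
        _ = (q₁:ℝ)/((M:ℝ)+1) := by ring
    have hrz : ((r:ℤ) : ZMod q₁) = (j : ZMod q₁) * ((w:ℤ) : ZMod q₁) := by
      rw [hrdef]
      push_cast
      rw [ZMod.natCast_self]
      ring
    have hdvd : (q₁:ℤ) ∣ r^2 - (y * j^2) * q₂ := by
      have h0 : ((r^2 - (y*j^2)*q₂ : ℤ) : ZMod q₁) = 0 := by
        push_cast
        rw [hrz]
        linear_combination ((j:ZMod q₁))^2 * (-(((w:ℤ):ZMod q₁))^2) * h1 +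
          ((j:ZMod q₁))^2 * ((y:ZMod q₁)*((q₂:ℕ):ZMod q₁)*(((w:ℤ):ZMod q₁)*(z:ZMod q₁)+1)) * hwz
      exact (ZMod.intCast_zmod_eq_zero_iff_dvd _ q₁).mp h0
    set x₂ : ℤ := y * j^2 with hx₂def
    set x₁ : ℤ := (r^2 - x₂*q₂)/q₁ with hx₁def
    have heq : x₁ * (q₁:ℤ) + x₂ * (q₂:ℤ) = r^2 := by
      have h2 : x₁ * (q₁:ℤ) = r^2 - x₂*q₂ := by
        rw [hx₁def]; exact Int.ediv_mul_cancel hdvd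
      linear_combination h2
    have hrne : r ≠ 0 := by
      intro h0
      have hz0 : ((r:ℤ):ZMod q₁) = 0 := by rw [h0]; simp
      rw [hrz] at hz0
      have hj : ((j:ℤ):ZMod q₁) = 0 := by
        calc ((j:ℤ):ZMod q₁) = (j:ZMod q₁)*(((w:ℤ):ZMod q₁)*(z:ZMod q₁)) := by
              rw [hwz, mul_one]
          _ = 0 := by rw [← mul_assoc, hz0, zero_mul]
      have hdj : (q₁:ℤ) ∣ j := (ZMod.intCast_zmod_eq_zero_iff_dvd _ _).mp hj
      have hjlt : j < (q₁:ℤ) := lt_of_le_of_lt hjM (by exact_mod_cast hMq₁)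
      have := Int.le_of_dvd hj0 hdj
      omega
    -- bounds
    have hx₂abs : |(x₂:ℝ)| ≤ (H:ℝ) * (M:ℝ)^2 := by
      have hyR : |(y:ℝ)| ≤ (H:ℝ) := by exact_mod_cast hy
      have hjR : |(j:ℝ)| ≤ (M:ℝ) := by
        rw [abs_of_pos (by exact_mod_cast hj0 : (0:ℝ) < (j:ℝ))]
        exact_mod_cast hjM
      rw [hx₂def]
      push_cast
      rw [abs_mul, abs_pow]
      exact mul_le_mul hyR (sq_mono' (abs_nonneg _) hjR) (by positivity) (by positivity)
    have key1 : (H:ℝ)*S ≤ 5*(Cε+1)*E₁*S₂ := by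
      apply le_of_pow_le_pow_left₀ two_ne_zero (by positivity)
      have hc : (Cε+1)*E₁^2 ≤ 25*(Cε+1)^2*E₁^2 :=
        mul_le_mul_of_nonneg_right (aux_c1 hCε) (sq_nonneg E₁)
      calc ((H:ℝ)*S)^2 = (H:ℝ) * ((H:ℝ)*(q₂:ℝ)) := by rw [mul_pow, hSsq]; ring
        _ = (H:ℝ) * S₂^2 := by rw [hS₂sq]
        _ ≤ ((Cε+1)*E₁^2) * S₂^2 := mul_le_mul_of_nonneg_right hHE (sq_nonneg _)
        _ ≤ (25*(Cε+1)^2*E₁^2) * S₂^2 := mul_le_mul_of_nonneg_right hc (sq_nonneg _)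
        _ = (5*(Cε+1)*E₁*S₂)^2 := by ring
    have hx₂bnd : |(x₂:ℝ)| * S ≤ 5*(Cε+1) * (q₁:ℝ) ^ ((9:ℝ)/8 + ε) := by
      calc |(x₂:ℝ)| *S ≤ ((H:ℝ)*(M:ℝ)^2)*S := mul_le_mul_of_nonneg_right hx₂abs hSpos.le
        _ ≤ ((H:ℝ)*t^2)*S := mul_le_mul_of_nonneg_right
            (mul_le_mul_of_nonneg_left hMt2 (by positivity)) hSpos.le
        _ = t^2 * ((H:ℝ)*S) := by ring
        _ ≤ t^2 * (5*(Cε+1)*E₁*S₂) := mul_le_mul_of_nonneg_left key1 (sq_nonneg t)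
        _ = 5*(Cε+1)*E₁*(t^2*S₂) := by ring
        _ = 5*(Cε+1) * (q₁:ℝ) ^ ((9:ℝ)/8 + ε) := by rw [ht2, hE₉]; ring
    have hb1 : (r:ℝ)^2 ≤ (q₁:ℝ)*S₂ := by
      have h1' : (r:ℝ)^2 ≤ ((q₁:ℝ)/((M:ℝ)+1))^2 := by
        calc (r:ℝ)^2 = |(r:ℝ)|^2 := (sq_abs _).symm
          _ ≤ ((q₁:ℝ)/((M:ℝ)+1))^2 := sq_mono' (abs_nonneg _) hrR
      have h2' : ((q₁:ℝ)/((M:ℝ)+1))^2 ≤ (q₁:ℝ)*S₂ := by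
        rw [div_pow, div_le_iff₀ (by positivity)]
        have ht2le : t^2 ≤ ((M:ℝ)+1)^2 := sq_mono' htnn hMlt.le
        calc (q₁:ℝ)^2 = (q₁:ℝ) * (t^2*S₂) := by rw [ht2]; ring
          _ ≤ (q₁:ℝ) * (((M:ℝ)+1)^2*S₂) := by
              apply mul_le_mul_of_nonneg_left _ (by positivity)
              exact mul_le_mul_of_nonneg_right ht2le hS₂pos.le
          _ = (q₁:ℝ)*S₂*((M:ℝ)+1)^2 := by ring
      linarith
    have hb2 : |(x₂:ℝ)| *(q₂:ℝ) ≤ (q₁:ℝ)*S₂ := by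
      calc |(x₂:ℝ)| *(q₂:ℝ) ≤ ((H:ℝ)*(M:ℝ)^2)*(q₂:ℝ) :=
            mul_le_mul_of_nonneg_right hx₂abs (by positivity)
        _ ≤ ((H:ℝ)*t^2)*(q₂:ℝ) := mul_le_mul_of_nonneg_right
            (mul_le_mul_of_nonneg_left hMt2 (by positivity)) (by positivity)
        _ = t^2*((H:ℝ)*(q₂:ℝ)) := by ring
        _ = t^2*S₂^2 := by rw [hS₂sq]
        _ = (t^2*S₂)*S₂ := by ring
        _ = (q₁:ℝ)*S₂ := by rw [ht2]
    have hcast' : (x₁:ℝ)*(q₁:ℝ) = (r:ℝ)^2 - (x₂:ℝ)*(q₂:ℝ) := by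
      have := congrArg (fun m : ℤ => (m:ℝ)) heq
      push_cast at this
      linarith
    have hx₁2S₂ : |(x₁:ℝ)| ≤ 2*S₂ := by
      have hq₁pos : (0:ℝ) < (q₁:ℝ) := by positivity
      have hq₂0 : (0:ℝ) ≤ (q₂:ℝ) := by positivity
      have e1 : -((x₂:ℝ)*(q₂:ℝ)) ≤ |(x₂:ℝ)| *(q₂:ℝ) := by
        have h := neg_le_abs ((x₂:ℝ)*(q₂:ℝ))
        rwa [abs_mul, abs_of_nonneg hq₂0] at h
      have e2 : (x₂:ℝ)*(q₂:ℝ) ≤ |(x₂:ℝ)| *(q₂:ℝ) := by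
        have h := le_abs_self ((x₂:ℝ)*(q₂:ℝ))
        rwa [abs_mul, abs_of_nonneg hq₂0] at h
      have hr2 : (0:ℝ) ≤ (r:ℝ)^2 := sq_nonneg _
      have hq₁S₂ : (0:ℝ) ≤ (q₁:ℝ)*S₂ := by positivity
      rw [abs_le]
      constructor
      · refine le_of_mul_le_mul_right ?_ hq₁pos
        linarith
      · refine le_of_mul_le_mul_right ?_ hq₁pos
        linarith
    have key2 : 2*S₂ ≤ 5*(Cε+1)*E₁*S := by
      apply le_of_pow_le_pow_left₀ two_ne_zero (by positivity)
      have hc : 4*(Cε+1)*E₁^2 ≤ 25*(Cε+1)^2*E₁^2 :=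
        mul_le_mul_of_nonneg_right (aux_c2 hCε) (sq_nonneg E₁)
      calc (2*S₂)^2 = 4*((H:ℝ)*(q₂:ℝ)) := by rw [mul_pow, hS₂sq]; ring
        _ = 4*(H:ℝ)*S^2 := by rw [hSsq]; ring
        _ ≤ 4*((Cε+1)*E₁^2)*S^2 := by
            apply mul_le_mul_of_nonneg_right _ (sq_nonneg S)
            linarith
        _ ≤ (25*(Cε+1)^2*E₁^2)*S^2 := by
            apply mul_le_mul_of_nonneg_right _ (sq_nonneg S)
            linarith
        _ = (5*(Cε+1)*E₁*S)^2 := by ring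
    refine ⟨x₁, x₂, r, hrne, heq, ?_, hx₂bnd⟩
    calc |(x₁:ℝ)| ≤ 2*S₂ := hx₁2S₂
      _ ≤ 5*(Cε+1)*E₁*S := key2

set_option maxHeartbeats 1000000 in
/-- Under the Zaharescu-type bound `H(q₁) ≤ C_ε·q₁^(1/4+ε)`, a coprime
progression in `[-T,T]` avoiding non-zero squares satisfies
`|A| ≤ C'·q₁^(1/8+ε)·T/q₂^(1/2)`. -/
theorem card_bound_via_H (ε : ℝ) (hε : 0 < ε) (Cε : ℝ) (hCε : 0 < Cε) :
    ∃ C' : ℝ, 0 < C' ∧ ∀ (q₁ q₂ : ℕ) (X₁ X₂ T : ℝ), 0 < q₁ → 0 < q₂ → q₁ ≤ q₂ →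
      Nat.Coprime q₁ q₂ → 1 ≤ X₁ → 1 ≤ X₂ → 0 < T →
      (∀ x₁ x₂ : ℤ, |(x₁ : ℝ)| ≤ X₁ → |(x₂ : ℝ)| ≤ X₂ →
        |((x₁ * q₁ + x₂ * q₂ : ℤ) : ℝ)| ≤ T) →
      (∀ x₁ x₂ : ℤ, |(x₁ : ℝ)| ≤ X₁ → |(x₂ : ℝ)| ≤ X₂ →
        ∀ n : ℤ, n ≠ 0 → x₁ * (q₁ : ℤ) + x₂ * (q₂ : ℤ) ≠ n ^ 2) →
      (Hfun q₁ : ℝ) ≤ Cε * (q₁ : ℝ) ^ ((1 : ℝ) / 4 + ε) →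
      (({m : ℤ | ∃ x₁ x₂ : ℤ, |(x₁ : ℝ)| ≤ X₁ ∧ |(x₂ : ℝ)| ≤ X₂ ∧
          m = x₁ * q₁ + x₂ * q₂}.ncard : ℝ)) ≤
        C' * (q₁ : ℝ) ^ ((1 : ℝ) / 8 + ε) * T / (q₂ : ℝ) ^ ((1 : ℝ) / 2) := by
  refine ⟨90*(Cε+1), by positivity, ?_⟩
  intro q₁ q₂ X₁ X₂ T hq₁ hq₂ h12 hcop hX₁ hX₂ hT hTbd hnsq hH
  have hq₁R : (1:ℝ) ≤ (q₁:ℝ) := by exact_mod_cast hq₁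
  have hq₂R : (1:ℝ) ≤ (q₂:ℝ) := by exact_mod_cast hq₂
  have hX₁0 : (0:ℝ) ≤ X₁ := by linarith
  have hX₂0 : (0:ℝ) ≤ X₂ := by linarith
  set E₁ : ℝ := (q₁:ℝ) ^ ((1:ℝ)/8 + ε) with hE₁def
  set S : ℝ := (q₂:ℝ) ^ ((1:ℝ)/2) with hSdef
  have hE₁pos : 0 < E₁ := Real.rpow_pos_of_pos (by linarith) _
  have hSpos : 0 < S := Real.rpow_pos_of_pos (by linarith) _
  have hSS : S * S = (q₂:ℝ) := by
    rw [hSdef, ← Real.rpow_add (by linarith)]; norm_num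
  have hE₉ : (q₁:ℝ) ^ ((9:ℝ)/8 + ε) = (q₁:ℝ) * E₁ := by
    rw [hE₁def, show (9:ℝ)/8 + ε = 1 + ((1:ℝ)/8 + ε) by ring,
      Real.rpow_add (by linarith) 1, Real.rpow_one]
  -- the square from the construction
  obtain ⟨a₁, a₂, n, hn, heq, hb₁, hb₂⟩ :=
    exists_square ε Cε hε hCε q₁ q₂ hq₁ hq₂ h12 hcop hH
  -- dichotomy
  have hdisj : X₁ ≤ 5*(Cε+1)*E₁*S ∨ X₂*S ≤ 5*(Cε+1) * (q₁:ℝ) ^ ((9:ℝ)/8 + ε) := by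
    by_contra hcon
    push_neg at hcon
    obtain ⟨hc1, hc2⟩ := hcon
    refine hnsq a₁ a₂ ?_ ?_ n hn heq
    · exact hb₁.trans hc1.le
    · have h' : |(a₂:ℝ)| * S < X₂ * S := lt_of_le_of_lt hb₂ hc2
      exact (lt_of_mul_lt_mul_right h' hSpos.le).le
  -- floors
  set K₁ : ℤ := ⌊X₁⌋ with hK₁def
  set K₂ : ℤ := ⌊X₂⌋ with hK₂def
  have hK₁1 : 1 ≤ K₁ := Int.le_floor.mpr (by exact_mod_cast hX₁)
  have hK₂1 : 1 ≤ K₂ := Int.le_floor.mpr (by exact_mod_cast hX₂)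
  have hK₁1R : (1:ℝ) ≤ (K₁:ℝ) := by exact_mod_cast hK₁1
  have hK₂1R : (1:ℝ) ≤ (K₂:ℝ) := by exact_mod_cast hK₂1
  have hK₁X : (K₁:ℝ) ≤ X₁ := Int.floor_le X₁
  have hK₂X : (K₂:ℝ) ≤ X₂ := Int.floor_le X₂
  have hXK₁ : X₁ < (K₁:ℝ)+1 := Int.lt_floor_add_one X₁
  have hXK₂ : X₂ < (K₂:ℝ)+1 := Int.lt_floor_add_one X₂
  -- trivial bounds from [-T,T]
  have hbX₁ : X₁ * (q₁:ℝ) ≤ 2*T := by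
    have h := hTbd K₁ 0 (by rw [abs_of_nonneg (by linarith)]; exact hK₁X)
      (by simp; linarith)
    push_cast at h
    rw [zero_mul, add_zero, abs_of_nonneg (by positivity)] at h
    have hX2K : X₁ ≤ 2*(K₁:ℝ) := by linarith
    calc X₁ * (q₁:ℝ) ≤ (2*(K₁:ℝ)) * (q₁:ℝ) :=
          mul_le_mul_of_nonneg_right hX2K (by positivity)
      _ = 2*((K₁:ℝ)*(q₁:ℝ)) := by ring
      _ ≤ 2*T := by linarith
  have hbX₂ : X₂ * (q₂:ℝ) ≤ 2*T := by
    have h := hTbd 0 K₂ (by simp; linarith)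
      (by rw [abs_of_nonneg (by linarith)]; exact hK₂X)
    push_cast at h
    rw [zero_mul, zero_add, abs_of_nonneg (by positivity)] at h
    have hX2K : X₂ ≤ 2*(K₂:ℝ) := by linarith
    calc X₂ * (q₂:ℝ) ≤ (2*(K₂:ℝ)) * (q₂:ℝ) :=
          mul_le_mul_of_nonneg_right hX2K (by positivity)
      _ = 2*((K₂:ℝ)*(q₂:ℝ)) := by ring
      _ ≤ 2*T := by linarith
  -- cardinality bound
  set F : Finset ℤ :=
    (Finset.Icc (-K₁) K₁ ×ˢ Finset.Icc (-K₂) K₂).image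
      (fun p : ℤ × ℤ => p.1 * q₁ + p.2 * q₂) with hFdef
  have hsub : {m : ℤ | ∃ x₁ x₂ : ℤ, |(x₁ : ℝ)| ≤ X₁ ∧ |(x₂ : ℝ)| ≤ X₂ ∧
      m = x₁ * q₁ + x₂ * q₂} ⊆ (F : Set ℤ) := by
    rintro m ⟨a, b, ha, hb, rfl⟩
    have ha' : |a| ≤ K₁ := Int.le_floor.mpr (by rw [Int.cast_abs]; exact ha)
    have hb' : |b| ≤ K₂ := Int.le_floor.mpr (by rw [Int.cast_abs]; exact hb)
    obtain ⟨ha1, ha2⟩ := abs_le.mp ha'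
    obtain ⟨hb1, hb2⟩ := abs_le.mp hb'
    refine Finset.mem_coe.mpr (Finset.mem_image.mpr ⟨(a, b), ?_, rfl⟩)
    rw [Finset.mem_product, Finset.mem_Icc, Finset.mem_Icc]
    exact ⟨⟨ha1, ha2⟩, hb1, hb2⟩
  have h1 : ({m : ℤ | ∃ x₁ x₂ : ℤ, |(x₁ : ℝ)| ≤ X₁ ∧ |(x₂ : ℝ)| ≤ X₂ ∧
      m = x₁ * q₁ + x₂ * q₂}).ncard ≤ F.card := by
    have := Set.ncard_le_ncard hsub F.finite_toSet
    rwa [Set.ncard_coe_finset] at this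
  have h2 : F.card ≤ (2*K₁+1).toNat * (2*K₂+1).toNat := by
    calc F.card ≤ (Finset.Icc (-K₁) K₁ ×ˢ Finset.Icc (-K₂) K₂).card :=
          Finset.card_image_le
      _ = (Finset.Icc (-K₁) K₁).card * (Finset.Icc (-K₂) K₂).card :=
          Finset.card_product _ _
      _ = (2*K₁+1).toNat * (2*K₂+1).toNat := by
          rw [Int.card_Icc, Int.card_Icc]
          congr 1 <;> omega
  have h3 : (((2*K₁+1).toNat : ℕ) : ℝ) ≤ 3*X₁ := by
    have hz : (((2*K₁+1).toNat : ℕ) : ℤ) = 2*K₁+1 := Int.toNat_of_nonneg (by omega)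
    have hz' : (((2*K₁+1).toNat : ℕ) : ℝ) = ((2*K₁+1 : ℤ) : ℝ) := by
      exact_mod_cast congrArg (Int.cast : ℤ → ℝ) hz
    rw [hz']
    push_cast
    linarith
  have h4 : (((2*K₂+1).toNat : ℕ) : ℝ) ≤ 3*X₂ := by
    have hz : (((2*K₂+1).toNat : ℕ) : ℤ) = 2*K₂+1 := Int.toNat_of_nonneg (by omega)
    have hz' : (((2*K₂+1).toNat : ℕ) : ℝ) = ((2*K₂+1 : ℤ) : ℝ) := by
      exact_mod_cast congrArg (Int.cast : ℤ → ℝ) hz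
    rw [hz']
    push_cast
    linarith
  have hcard : (({m : ℤ | ∃ x₁ x₂ : ℤ, |(x₁ : ℝ)| ≤ X₁ ∧ |(x₂ : ℝ)| ≤ X₂ ∧
      m = x₁ * q₁ + x₂ * q₂}).ncard : ℝ) ≤ 9*X₁*X₂ := by
    calc (({m : ℤ | ∃ x₁ x₂ : ℤ, |(x₁ : ℝ)| ≤ X₁ ∧ |(x₂ : ℝ)| ≤ X₂ ∧
        m = x₁ * q₁ + x₂ * q₂}).ncard : ℝ) ≤ (F.card : ℝ) := by exact_mod_cast h1
      _ ≤ (((2*K₁+1).toNat : ℕ) : ℝ) * (((2*K₂+1).toNat : ℕ) : ℝ) := by exact_mod_cast h2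
      _ ≤ (3*X₁) * (3*X₂) := mul_le_mul h3 h4 (by positivity) (by positivity)
      _ = 9*X₁*X₂ := by ring
  -- conclude
  rw [le_div_iff₀ hSpos]
  rcases hdisj with hX₁b | hX₂b
  · calc (({m : ℤ | ∃ x₁ x₂ : ℤ, |(x₁ : ℝ)| ≤ X₁ ∧ |(x₂ : ℝ)| ≤ X₂ ∧
        m = x₁ * q₁ + x₂ * q₂}).ncard : ℝ) * S ≤ (9*X₁*X₂) * S :=
          mul_le_mul_of_nonneg_right hcard hSpos.le
      _ = (9*X₂)*X₁*S := by ring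
      _ ≤ (9*X₂)*(5*(Cε+1)*E₁*S)*S := by
          refine mul_le_mul_of_nonneg_right
            (mul_le_mul_of_nonneg_left hX₁b (by positivity)) hSpos.le
      _ = 45*(Cε+1)*E₁*X₂*(S*S) := by ring
      _ = 45*(Cε+1)*E₁*(X₂*(q₂:ℝ)) := by rw [hSS]; ring
      _ ≤ 45*(Cε+1)*E₁*(2*T) := by
          refine mul_le_mul_of_nonneg_left hbX₂ (by positivity)
      _ = 90*(Cε+1)*E₁*T := by ring
  · calc (({m : ℤ | ∃ x₁ x₂ : ℤ, |(x₁ : ℝ)| ≤ X₁ ∧ |(x₂ : ℝ)| ≤ X₂ ∧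
        m = x₁ * q₁ + x₂ * q₂}).ncard : ℝ) * S ≤ (9*X₁*X₂) * S :=
          mul_le_mul_of_nonneg_right hcard hSpos.le
      _ = (9*X₁)*(X₂*S) := by ring
      _ ≤ (9*X₁)*(5*(Cε+1) * (q₁:ℝ) ^ ((9:ℝ)/8 + ε)) :=
          mul_le_mul_of_nonneg_left hX₂b (by positivity)
      _ = 45*(Cε+1)*E₁*(X₁*(q₁:ℝ)) := by rw [hE₉]; ring
      _ ≤ 45*(Cε+1)*E₁*(2*T) := by
          refine mul_le_mul_of_nonneg_left hbX₁ (by positivity)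
      _ = 90*(Cε+1)*E₁*T := by ring
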